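/- Let r, n, m, a, b, i be positive integers with n = 3, 1 ≤ n ≤ r-2, 0 ≤ m ≤ r-2, a ≥ 2, b ≥ 1, i ≤ r+1, satisfying a(r - 4) = m + 2 and b(r - m - 1) = 4 + i - r and i = (r+1)b - (r-4)(ab-1). Then (r, a, m) is one of: (8, 2, 6), (7, 2, 4), (6, 3, 4), (6, 2, 2), (5, 5, 3), (5, 4, 2), (5, 3, 1), (5, 2, 0). -/
import Mathlib
set_option maxHeartbeats 1000000


theorem stmt_14 (r n m a b i : ℤ)
    (hn : n = 3) (hn1 : 1 ≤ n) (hn2 : n ≤ r - 2) (hm1 : 0 ≤ m) (hm2 : m ≤ r - 2)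
    (ha : 2 ≤ a) (hb : 1 ≤ b) (hi : 0 < i) (hile : i ≤ r + 1)
    (h1 : a * (r - 4) = m + 2)
    (h2 : b * (r - m - 1) = 4 + i - r)
    (h3 : i = (r + 1) * b - (r - 4) * (a * b - 1)) :
    (r = 8 ∧ a = 2 ∧ m = 6) ∨ (r = 7 ∧ a = 2 ∧ m = 4) ∨ (r = 6 ∧ a = 3 ∧ m = 4) ∨
    (r = 6 ∧ a = 2 ∧ m = 2) ∨ (r = 5 ∧ a = 5 ∧ m = 3) ∨ (r = 5 ∧ a = 4 ∧ m = 2) ∨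
    (r = 5 ∧ a = 3 ∧ m = 1) ∨ (r = 5 ∧ a = 2 ∧ m = 0) := by
  have hr5 : 5 ≤ r := by omega
  have key : 2 * (r - 4) ≤ a * (r - 4) := mul_le_mul_of_nonneg_right ha (by omega)
  rw [h1] at key
  have hr8 : r ≤ 8 := by omega
  clear h2 h3 hi hile hb hn hn1 hn2
  have hr : r = 5 ∨ r = 6 ∨ r = 7 ∨ r = 8 := by omega
  rcases hr with rfl | rfl | rfl | rfl <;> omega
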